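/- Let (a,b) be a pair of elements of a unital algebra A orthogonal with respect to a pair of normalized linear functionals (φ, ψ), with φ-distribution of a having moments μ(k) and ψ-distribution of b having moments ν(l). Then for each m ≥ 1, the moment φ((a+b)^m) depends only on μ(1),...,μ(m) and ν(1),...,ν(m-2); in particular φ(a+b) = μ(1) and φ((a+b)²) = μ(2). -/

import Mathlib

universe u v

/-- The pair `(a, b)` of elements of a unital algebra `A` is orthogonal with
respect to the pair of normalized linear functionals `(φ, ψ)`: writing
`⟨b⟩, ⟨a⟩` for the non-unital subalgebras generated by `b` resp. `a` and
`alg(a,b)` for the (unital) algebra generated by `a` and `b`,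
(i) `φ(w b') = φ(b' w) = 0` for `b' ∈ ⟨b⟩` and `w ∈ alg(a,b)`;
(ii) `φ(w₁ a₁ b' a₂ w₂) = ψ(b') (φ(w₁ a₁ a₂ w₂) - φ(w₁ a₁) φ(a₂ w₂))`
for `a₁, a₂ ∈ ⟨a⟩`, `b' ∈ ⟨b⟩`, `w₁, w₂ ∈ alg(a,b)`. -/
def OrthogonalPair (A : Type u) [Ring A] [Algebra ℂ A]
    (φ ψ : A →ₗ[ℂ] ℂ) (a b : A) : Prop :=
  (∀ b' ∈ NonUnitalAlgebra.adjoin ℂ ({b} : Set A),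
    ∀ w ∈ Algebra.adjoin ℂ ({a, b} : Set A), φ (w * b') = 0 ∧ φ (b' * w) = 0) ∧
  (∀ a₁ ∈ NonUnitalAlgebra.adjoin ℂ ({a} : Set A),
   ∀ a₂ ∈ NonUnitalAlgebra.adjoin ℂ ({a} : Set A),
   ∀ b' ∈ NonUnitalAlgebra.adjoin ℂ ({b} : Set A),
   ∀ w₁ ∈ Algebra.adjoin ℂ ({a, b} : Set A),
   ∀ w₂ ∈ Algebra.adjoin ℂ ({a, b} : Set A),
     φ (w₁ * a₁ * b' * a₂ * w₂) =
       ψ b' * (φ (w₁ * a₁ * a₂ * w₂) - φ (w₁ * a₁) * φ (a₂ * w₂)))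

namespace Stmt15Aux

lemma takeWhile_not_replicate (w : List Bool) :
    w.takeWhile (fun c => !c) = List.replicate (w.takeWhile (fun c => !c)).length false := by
  apply List.eq_replicate_of_mem
  intro c hc
  have := List.mem_takeWhile_imp hc
  simpa using this

lemma takeWhile_id_replicate (w : List Bool) :
    w.takeWhile (fun c => c) = List.replicate (w.takeWhile (fun c => c)).length true := by
  apply List.eq_replicate_of_mem
  intro c hc
  have := List.mem_takeWhile_imp hc
  simpa using this

lemma count_true_dropWhile_not (w : List Bool) :
    (w.dropWhile (fun c => !c)).count true = w.count true := by
  conv_rhs => rw [← List.takeWhile_append_dropWhile (p := fun c => !c) (l := w)]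
  rw [List.count_append]
  rw [takeWhile_not_replicate w]
  simp [List.count_replicate]

lemma count_true_decomp (w : List Bool) :
    w.count true = (w.takeWhile (fun c => c)).length + (w.dropWhile (fun c => c)).count true := by
  conv_lhs => rw [← List.takeWhile_append_dropWhile (p := fun c => c) (l := w)]
  rw [List.count_append]
  congr 1
  rw [takeWhile_id_replicate w]
  simp

lemma head_true_of_dropWhile_not_ne_nil (w : List Bool) (h : w.dropWhile (fun c => !c) ≠ []) :
    (w.dropWhile (fun c => !c)).head? = some true := by
  set r := w.dropWhile (fun c => !c) with hr
  have hh : (fun c => !c) (r.head h) = false := List.head_dropWhile_not _ _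
  have hh' : r.head h = true := by simpa using hh
  rw [List.head?_eq_head h, hh']

lemma head_false_of_dropWhile_id_ne_nil (w : List Bool) (h : w.dropWhile (fun c => c) ≠ []) :
    (w.dropWhile (fun c => c)).head? = some false := by
  set r := w.dropWhile (fun c => c) with hr
  have hh' : r.head h = false := List.head_dropWhile_not (fun c => c) h
  rw [List.head?_eq_head h, hh']

lemma one_le_takeWhile_id_length (w : List Bool) (h : w.dropWhile (fun c => !c) ≠ []) :
    1 ≤ ((w.dropWhile (fun c => !c)).takeWhile (fun c => c)).length := by
  have hh2 := head_true_of_dropWhile_not_ne_nil w h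
  obtain ⟨x, t, hxt⟩ := List.exists_cons_of_ne_nil h
  rw [hxt] at hh2 ⊢
  simp at hh2
  subst hh2
  simp [List.takeWhile_cons]

lemma one_le_takeWhile_not_length (w : List Bool) (hne : w ≠ []) (h : w.head? = some false) :
    1 ≤ (w.takeWhile (fun c => !c)).length := by
  obtain ⟨x, t, hxt⟩ := List.exists_cons_of_ne_nil hne
  rw [hxt] at h ⊢
  simp at h
  subst h
  simp [List.takeWhile_cons]

noncomputable def Wm (μ ν : ℕ → ℂ) (w : List Bool) : ℂ :=
  if w = [] then 1
  else if w.head? = some true ∨ w.getLast? = some true then 0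
  else
    let k := (w.takeWhile (fun c => !c)).length
    let rest1 := w.dropWhile (fun c => !c)
    if rest1 = [] then μ k
    else
      let l := (rest1.takeWhile (fun c => c)).length
      let rest := rest1.dropWhile (fun c => c)
      ν l * (Wm μ ν (List.replicate k false ++ rest) - μ k * Wm μ ν rest)
termination_by (w.count true)
decreasing_by
  all_goals rename_i h1 h2 h3
  · have e1 : (List.replicate (w.takeWhile (fun c => !c)).length false
        ++ (w.dropWhile (fun c => !c)).dropWhile (fun c => c)).count true
        = ((w.dropWhile (fun c => !c)).dropWhile (fun c => c)).count true := by
      simp [List.count_replicate]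
    rw [e1, ← count_true_dropWhile_not w, count_true_decomp (w.dropWhile (fun c => !c))]
    have := one_le_takeWhile_id_length w h3
    omega
  · rw [← count_true_dropWhile_not w, count_true_decomp (w.dropWhile (fun c => !c))]
    have := one_le_takeWhile_id_length w h3
    omega

lemma Wm_nil (μ ν : ℕ → ℂ) : Wm μ ν [] = 1 := by rw [Wm]; simp

lemma Wm_of_true (μ ν : ℕ → ℂ) (w : List Bool)
    (h : w.head? = some true ∨ w.getLast? = some true) : Wm μ ν w = 0 := by
  have hne : w ≠ [] := by rcases h with h | h <;> rintro rfl <;> simp at h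
  rw [Wm, if_neg hne, if_pos h]

lemma Wm_all_false (μ ν : ℕ → ℂ) (w : List Bool) (hne : w ≠ [])
    (hd : w.dropWhile (fun c => !c) = []) : Wm μ ν w = μ w.length := by
  have hw : w = List.replicate (w.takeWhile (fun c => !c)).length false := by
    conv_lhs => rw [← List.takeWhile_append_dropWhile (p := fun c => !c) (l := w), hd]
    rw [List.append_nil]
    exact takeWhile_not_replicate w
  have hlen : (w.takeWhile (fun c => !c)).length = w.length := by
    conv_rhs => rw [hw]; simp
  have hpos : 0 < w.length := List.length_pos_iff.2 hne
  have hh : ¬ (w.head? = some true ∨ w.getLast? = some true) := by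
    rw [show w.head? = (List.replicate (w.takeWhile (fun c => !c)).length false).head? by rw [← hw],
      show w.getLast? = (List.replicate (w.takeWhile (fun c => !c)).length false).getLast? by rw [← hw]]
    rw [List.head?_replicate, List.getLast?_replicate, hlen]
    have : w.length ≠ 0 := hpos.ne'
    simp [this]
  rw [Wm, if_neg hne, if_neg hh, if_pos hd, hlen]

lemma Wm_step (μ ν : ℕ → ℂ) (w : List Bool)
    (hne : w ≠ [])
    (hh : ¬ (w.head? = some true ∨ w.getLast? = some true))
    (hd : w.dropWhile (fun c => !c) ≠ []) :
    Wm μ ν w =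
      ν ((w.dropWhile (fun c => !c)).takeWhile (fun c => c)).length *
        (Wm μ ν (List.replicate (w.takeWhile (fun c => !c)).length false ++
            ((w.dropWhile (fun c => !c)).dropWhile (fun c => c)))
          - μ (w.takeWhile (fun c => !c)).length *
            Wm μ ν ((w.dropWhile (fun c => !c)).dropWhile (fun c => c))) := by
  conv_lhs => rw [Wm]
  rw [if_neg hne, if_neg hh, if_neg hd]

lemma head?_false_of_ne_true (w : List Bool) (hne : w ≠ []) (h : ¬ w.head? = some true) :
    w.head? = some false := by
  obtain ⟨x, t, rfl⟩ := List.exists_cons_of_ne_nil hne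
  cases x
  · simp
  · simp at h

lemma eq_replicate_false_of_dropWhile_nil (w : List Bool)
    (hd : w.dropWhile (fun c => !c) = []) :
    w = List.replicate (w.takeWhile (fun c => !c)).length false := by
  conv_lhs => rw [← List.takeWhile_append_dropWhile (p := fun c => !c) (l := w), hd]
  rw [List.append_nil]
  exact takeWhile_not_replicate w

lemma eq_replicate_true_of_dropWhile_id_nil (w : List Bool)
    (hd : w.dropWhile (fun c => c) = []) :
    w = List.replicate (w.takeWhile (fun c => c)).length true := by
  conv_lhs => rw [← List.takeWhile_append_dropWhile (p := fun c => c) (l := w), hd]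
  rw [List.append_nil]
  exact takeWhile_id_replicate w

section

variable {A : Type*} [Ring A] [Algebra ℂ A]

def Pw (a b : A) (w : List Bool) : A := (w.map (fun c => if c then b else a)).prod

lemma Pw_nil (a b : A) : Pw a b [] = 1 := rfl

lemma Pw_cons (a b : A) (c : Bool) (w : List Bool) :
    Pw a b (c :: w) = (if c then b else a) * Pw a b w := by simp [Pw]

lemma Pw_append (a b : A) (w1 w2 : List Bool) :
    Pw a b (w1 ++ w2) = Pw a b w1 * Pw a b w2 := by simp [Pw]

lemma Pw_replicate_false (a b : A) (k : ℕ) :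
    Pw a b (List.replicate k false) = a ^ k := by
  simp [Pw, List.map_replicate, List.prod_replicate]

lemma Pw_replicate_true (a b : A) (k : ℕ) :
    Pw a b (List.replicate k true) = b ^ k := by
  simp [Pw, List.map_replicate, List.prod_replicate]

lemma pow_mem_nonunital_adjoin (x : A) (k : ℕ) (hk : 1 ≤ k) :
    x ^ k ∈ NonUnitalAlgebra.adjoin ℂ ({x} : Set A) := by
  induction k with
  | zero => omega
  | succ n ih =>
    rcases Nat.eq_zero_or_pos n with rfl | hn
    · simpa using NonUnitalAlgebra.self_mem_adjoin_singleton ℂ x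
    · rw [pow_succ]
      exact mul_mem (ih hn) (NonUnitalAlgebra.self_mem_adjoin_singleton ℂ x)

lemma Pw_mem (a b : A) (w : List Bool) :
    Pw a b w ∈ Algebra.adjoin ℂ ({a, b} : Set A) := by
  apply Subalgebra.list_prod_mem
  intro x hx
  simp only [List.mem_map] at hx
  obtain ⟨c, -, rfl⟩ := hx
  cases c
  · exact Algebra.subset_adjoin (by simp)
  · exact Algebra.subset_adjoin (by simp)

lemma phi_Pw (φ ψ : A →ₗ[ℂ] ℂ) (a b : A) (hφ1 : φ 1 = 1)
    (horth : OrthogonalPair A φ ψ a b) (w : List Bool) :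
    φ (Pw a b w) = Wm (fun k => φ (a ^ k)) (fun l => ψ (b ^ l)) w := by
  set μ : ℕ → ℂ := fun k => φ (a ^ k) with hμ
  set ν : ℕ → ℂ := fun l => ψ (b ^ l) with hν
  suffices H : ∀ n (w : List Bool), w.count true = n → φ (Pw a b w) = Wm μ ν w from
    H _ w rfl
  intro n
  induction n using Nat.strong_induction_on with
  | _ n IH =>
  intro w hwn
  by_cases hne : w = []
  · subst hne; rw [Wm_nil]; simpa [Pw_nil] using hφ1
  by_cases hh : w.head? = some true ∨ w.getLast? = some true
  · rw [Wm_of_true _ _ _ hh]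
    rcases hh with hh | hh
    · obtain ⟨x, t, rfl⟩ := List.exists_cons_of_ne_nil hne
      simp only [List.head?_cons, Option.some.injEq] at hh
      subst hh
      rw [Pw_cons]
      simpa using
        (horth.1 b (NonUnitalAlgebra.self_mem_adjoin_singleton ℂ b) (Pw a b t)
          (Pw_mem a b t)).2
    · have hw' : w = w.dropLast ++ [w.getLast hne] := (List.dropLast_append_getLast hne).symm
      have hlast : w.getLast hne = true := by
        rw [List.getLast?_eq_getLast hne] at hh
        exact Option.some.inj hh
      rw [hw', hlast, Pw_append, Pw_cons, Pw_nil]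
      simp only [if_pos, mul_one]
      simpa using
        (horth.1 b (NonUnitalAlgebra.self_mem_adjoin_singleton ℂ b) (Pw a b w.dropLast)
          (Pw_mem a b w.dropLast)).1
  push_neg at hh
  obtain ⟨hh1, hh2⟩ := hh
  have hhead : w.head? = some false := head?_false_of_ne_true w hne hh1
  by_cases hd : w.dropWhile (fun c => !c) = []
  · rw [Wm_all_false μ ν w hne hd]
    have hw' := eq_replicate_false_of_dropWhile_nil w hd
    have hlen : (w.takeWhile (fun c => !c)).length = w.length := by
      conv_rhs => rw [hw']
      simp
    conv_lhs => rw [hw', Pw_replicate_false]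
    rw [hlen]
  · -- main recursive step
    set k := (w.takeWhile (fun c => !c)).length with hk
    set rest1 := w.dropWhile (fun c => !c) with hrest1
    set l := (rest1.takeWhile (fun c => c)).length with hl
    set rest := rest1.dropWhile (fun c => c) with hrest
    have hl1 : 1 ≤ l := one_le_takeWhile_id_length w hd
    have hk1 : 1 ≤ k := one_le_takeWhile_not_length w hne hhead
    have hrest1_decomp : rest1 = List.replicate l true ++ rest := by
      conv_lhs => rw [← List.takeWhile_append_dropWhile (p := fun c => c) (l := rest1)]
      rw [← takeWhile_id_replicate]
    have hrest_ne : rest ≠ [] := by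
      intro hrnil
      apply hh2
      rw [← List.takeWhile_append_dropWhile (p := fun c => !c) (l := w), List.getLast?_append]
      rw [← hrest1, hrest1_decomp, hrnil, List.append_nil, List.getLast?_replicate]
      rw [if_neg (by omega)]
      rfl
    have hrh : rest.head? = some false := head_false_of_dropWhile_id_ne_nil rest1 hrest_ne
    set k2 := (rest.takeWhile (fun c => !c)).length with hk2def
    set rest2 := rest.dropWhile (fun c => !c) with hrest2
    have hk2 : 1 ≤ k2 := one_le_takeWhile_not_length rest hrest_ne hrh
    have hrest_decomp : rest = List.replicate k2 false ++ rest2 := by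
      conv_lhs => rw [← List.takeWhile_append_dropWhile (p := fun c => !c) (l := rest)]
      rw [← takeWhile_not_replicate]
    have hwdecomp : w = List.replicate k false ++ (List.replicate l true ++ rest) := by
      conv_lhs => rw [← List.takeWhile_append_dropWhile (p := fun c => !c) (l := w)]
      rw [← takeWhile_not_replicate, ← hrest1, hrest1_decomp]
    have hprod : Pw a b w = a ^ k * b ^ l * (a ^ k2) * Pw a b rest2 := by
      rw [hwdecomp, hrest_decomp, Pw_append, Pw_append, Pw_append,
        Pw_replicate_false, Pw_replicate_true, Pw_replicate_false]
      rw [mul_assoc, mul_assoc]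
    have horth2 := horth.2 (a ^ k) (pow_mem_nonunital_adjoin a k hk1)
      (a ^ k2) (pow_mem_nonunital_adjoin a k2 hk2)
      (b ^ l) (pow_mem_nonunital_adjoin b l hl1)
      1 (one_mem _) (Pw a b rest2) (Pw_mem a b rest2)
    simp only [one_mul] at horth2
    have e1 : a ^ k * a ^ k2 * Pw a b rest2 = Pw a b (List.replicate k false ++ rest) := by
      rw [hrest_decomp, Pw_append, Pw_append, Pw_replicate_false, Pw_replicate_false,
        mul_assoc]
    have e2 : a ^ k2 * Pw a b rest2 = Pw a b rest := by
      rw [hrest_decomp, Pw_append, Pw_replicate_false]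
    -- count bookkeeping
    have hcw : w.count true = l + rest.count true := by
      rw [← count_true_dropWhile_not w, ← hrest1, count_true_decomp rest1, ← hl, ← hrest]
    have hc1 : (List.replicate k false ++ rest).count true = rest.count true := by
      simp [List.count_replicate]
    have ih1 : φ (Pw a b (List.replicate k false ++ rest)) =
        Wm μ ν (List.replicate k false ++ rest) := by
      apply IH (rest.count true) (by omega) _ hc1
    have ih2 : φ (Pw a b rest) = Wm μ ν rest := IH (rest.count true) (by omega) _ rfl
    rw [Wm_step μ ν w hne (by push_neg; exact ⟨hh1, hh2⟩) hd]
    rw [hprod, horth2, e1, e2, ih1, ih2]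

lemma expand_pow (x y : A) (m : ℕ) :
    (x + y) ^ m = ∑ f : Fin m → Bool, Pw x y (List.ofFn f) := by
  induction m with
  | zero => simp [Pw]
  | succ m ih =>
    rw [pow_succ', ih, add_mul, Finset.mul_sum, Finset.mul_sum]
    have step : ∑ f : Fin (m + 1) → Bool, Pw x y (List.ofFn f)
        = ∑ p : Bool × (Fin m → Bool), Pw x y (List.ofFn (Fin.cons p.1 p.2)) := by
      refine (Fintype.sum_equiv (Fin.consEquiv fun _ => Bool) _ _ ?_).symm
      intro p
      rfl
    rw [step, Fintype.sum_prod_type]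
    have step2 : ∀ (c : Bool) (f : Fin m → Bool),
        Pw x y (List.ofFn (Fin.cons c f)) = (if c then y else x) * Pw x y (List.ofFn f) := by
      intro c f
      rw [List.ofFn_succ, Pw_cons]
      simp
    simp only [step2]
    rw [Fintype.sum_bool]
    rw [add_comm]
    simp

end

lemma Wm_congr (μ μ' ν ν' : ℕ → ℂ) (n : ℕ)
    (hμ : ∀ k, 1 ≤ k → k ≤ n → μ' k = μ k)
    (hν : ∀ l, 1 ≤ l → l ≤ n - 2 → ν' l = ν l) :
    ∀ w : List Bool, w.length ≤ n → Wm μ' ν' w = Wm μ ν w := by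
  suffices H : ∀ m (w : List Bool), w.count true = m → w.length ≤ n →
      Wm μ' ν' w = Wm μ ν w from fun w h => H _ w rfl h
  intro m
  induction m using Nat.strong_induction_on with
  | _ m IH =>
  intro w hwm hwlen
  by_cases hne : w = []
  · subst hne; rw [Wm_nil, Wm_nil]
  by_cases hh : w.head? = some true ∨ w.getLast? = some true
  · rw [Wm_of_true _ _ _ hh, Wm_of_true _ _ _ hh]
  by_cases hd : w.dropWhile (fun c => !c) = []
  · rw [Wm_all_false _ _ w hne hd, Wm_all_false _ _ w hne hd]
    exact hμ _ (List.length_pos_iff.2 hne) hwlen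
  · have hh' := hh
    push_neg at hh'
    obtain ⟨hh1, hh2⟩ := hh'
    have hhead : w.head? = some false := head?_false_of_ne_true w hne hh1
    set k := (w.takeWhile (fun c => !c)).length with hk
    set rest1 := w.dropWhile (fun c => !c) with hrest1
    set l := (rest1.takeWhile (fun c => c)).length with hl
    set rest := rest1.dropWhile (fun c => c) with hrest
    have hl1 : 1 ≤ l := one_le_takeWhile_id_length w hd
    have hk1 : 1 ≤ k := one_le_takeWhile_not_length w hne hhead
    have hrest1_decomp : rest1 = List.replicate l true ++ rest := by
      conv_lhs => rw [← List.takeWhile_append_dropWhile (p := fun c => c) (l := rest1)]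
      rw [← takeWhile_id_replicate]
    have hrest_ne : rest ≠ [] := by
      intro hrnil
      apply hh2
      rw [← List.takeWhile_append_dropWhile (p := fun c => !c) (l := w), List.getLast?_append]
      rw [← hrest1, hrest1_decomp, hrnil, List.append_nil, List.getLast?_replicate]
      rw [if_neg (by omega)]
      rfl
    have hwdecomp : w = List.replicate k false ++ (List.replicate l true ++ rest) := by
      conv_lhs => rw [← List.takeWhile_append_dropWhile (p := fun c => !c) (l := w)]
      rw [← takeWhile_not_replicate, ← hrest1, hrest1_decomp]
    have hrlen : 1 ≤ rest.length := List.length_pos_iff.2 hrest_ne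
    have hwlen' : w.length = k + l + rest.length := by
      conv_lhs => rw [hwdecomp]
      simp [add_assoc]
    -- counts
    have hcw : w.count true = l + rest.count true := by
      rw [← count_true_dropWhile_not w, ← hrest1, count_true_decomp rest1, ← hl, ← hrest]
    have hc1 : (List.replicate k false ++ rest).count true = rest.count true := by
      simp [List.count_replicate]
    have ih1 : Wm μ' ν' (List.replicate k false ++ rest) =
        Wm μ ν (List.replicate k false ++ rest) := by
      apply IH (rest.count true) (by omega) _ hc1
      simp only [List.length_append, List.length_replicate]
      omega
    have ih2 : Wm μ' ν' rest = Wm μ ν rest :=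
      IH (rest.count true) (by omega) _ rfl (by omega)
    rw [Wm_step μ' ν' w hne hh hd, Wm_step μ ν w hne hh hd]
    rw [← hk, ← hrest1, ← hl, ← hrest, ih1, ih2,
      hν l hl1 (by omega), hμ k hk1 (by omega)]

end Stmt15Aux

/-- Proposition 5.2: if `(a, b)` is orthogonal w.r.t. `(φ, ψ)`, then for each
`m ≥ 1` the moment `φ((a+b)^m)` depends only on the moments
`μ(1),…,μ(m)` of `a` (w.r.t. `φ`) and `ν(1),…,ν(m-2)` of `b` (w.r.t. `ψ`):
any other orthogonal pair with matching moments has the same `m`-th moment of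
the sum.  In particular `φ(a+b) = φ(a)` and `φ((a+b)²) = φ(a²)`. -/
theorem stmt15 :
    ∀ (A : Type u) [instR : Ring A] [instA : Algebra ℂ A]
      (φ ψ : A →ₗ[ℂ] ℂ) (a b : A),
      φ 1 = 1 → ψ 1 = 1 → OrthogonalPair A φ ψ a b →
      (φ (a + b) = φ a) ∧ (φ ((a + b) ^ 2) = φ (a ^ 2)) ∧
      ∀ m : ℕ, 1 ≤ m →
        ∀ (A' : Type v) [instR' : Ring A'] [instA' : Algebra ℂ A']
          (φ' ψ' : A' →ₗ[ℂ] ℂ) (a' b' : A'),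
          φ' 1 = 1 → ψ' 1 = 1 → OrthogonalPair A' φ' ψ' a' b' →
          (∀ k : ℕ, 1 ≤ k → k ≤ m → φ' (a' ^ k) = φ (a ^ k)) →
          (∀ l : ℕ, 1 ≤ l → l ≤ m - 2 → ψ' (b' ^ l) = ψ (b ^ l)) →
          φ' ((a' + b') ^ m) = φ ((a + b) ^ m) := by
  intro A _ _ φ ψ a b hφ1 hψ1 horth
  have hbmem := NonUnitalAlgebra.self_mem_adjoin_singleton ℂ b
  have hamem : a ∈ Algebra.adjoin ℂ ({a, b} : Set A) := Algebra.subset_adjoin (by simp)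
  have hbmem' : b ∈ Algebra.adjoin ℂ ({a, b} : Set A) := Algebra.subset_adjoin (by simp)
  refine ⟨?_, ?_, ?_⟩
  · have hb : φ b = 0 := by
      have := (horth.1 b hbmem 1 (one_mem _)).1
      rwa [one_mul] at this
    rw [map_add, hb, add_zero]
  · have hab : φ (a * b) = 0 := (horth.1 b hbmem a hamem).1
    have hba : φ (b * a) = 0 := (horth.1 b hbmem a hamem).2
    have hbb : φ (b * b) = 0 := (horth.1 b hbmem b hbmem').1
    rw [sq, sq, add_mul, mul_add, mul_add, map_add, map_add, map_add, hab, hba, hbb]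
    simp
  · intro m hm A' _ _ φ' ψ' a' b' hφ'1 hψ'1 horth' hμ hν
    rw [Stmt15Aux.expand_pow a b m, Stmt15Aux.expand_pow a' b' m, map_sum, map_sum]
    refine Finset.sum_congr rfl fun f _ => ?_
    rw [Stmt15Aux.phi_Pw φ ψ a b hφ1 horth, Stmt15Aux.phi_Pw φ' ψ' a' b' hφ'1 horth']
    exact Stmt15Aux.Wm_congr (fun k => φ (a ^ k)) (fun k => φ' (a' ^ k))
      (fun l => ψ (b ^ l)) (fun l => ψ' (b' ^ l)) m hμ hν (List.ofFn f) (by simp)
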